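/- arXiv:2006.16561 — 3 statements merged into one kernel-verified Lean document; each statement's English description precedes it below -/
import Mathlib

section
/- Let φ : ℝ → ℝ be differentiable and suppose ψ = (φ')² is convex. Then for all real numbers a and b, (φ(a) - φ(b))² ≤ (1/2) · (a - b)² · (ψ(a) + ψ(b)). -/
open MeasureTheory intervalIntegral Set

private lemma smvi_aux (φ ψ : ℝ → ℝ) (hφ : Differentiable ℝ φ)
    (hψ : ψ = fun s => (deriv φ s) ^ 2) (hconv : ConvexOn ℝ Set.univ ψ) {a b : ℝ}
    (hba : b < a) :
    (φ a - φ b) ^ 2 ≤ (1 / 2) * (a - b) ^ 2 * (ψ a + ψ b) := by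
  have hab : (0:ℝ) < a - b := by linarith
  have hcontψ : Continuous ψ := by
    have := hconv.continuousOn isOpen_univ
    rwa [← continuousOn_univ]
  have hmeas : Measurable (deriv φ) := measurable_deriv φ
  have hψint : IntegrableOn ψ (Icc b a) volume :=
    hcontψ.continuousOn.integrableOn_Icc
  have hφ'int : IntegrableOn (deriv φ) (Icc b a) volume := by
    refine Integrable.mono' (g := fun x => 1 + ψ x)
      ((integrable_const 1).add hψint) (hmeas.aestronglyMeasurable) ?_
    filter_upwards with x
    have : |deriv φ x| ≤ 1 + (deriv φ x) ^ 2 := by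
      nlinarith [sq_nonneg (|deriv φ x| - 1), sq_abs (deriv φ x)]
    simpa [hψ, Real.norm_eq_abs] using this
  have hftc : ∫ x in Icc b a, deriv φ x = φ a - φ b := by
    have h1 : ∫ x in b..a, deriv φ x = φ a - φ b :=
      integral_deriv_eq_sub (fun x _ => hφ x)
        ((intervalIntegrable_iff_integrableOn_Icc_of_le hba.le).2 hφ'int)
    rw [← h1, intervalIntegral.integral_of_le hba.le,
      MeasureTheory.integral_Icc_eq_integral_Ioc]
  have hvol : (volume (Icc b a)).toReal = a - b := by
    rw [Real.volume_Icc, ENNReal.toReal_ofReal hab.le]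
  -- Jensen's inequality for sq
  have hjensen : ((a - b)⁻¹ * (φ a - φ b)) ^ 2
      ≤ (a - b)⁻¹ * ∫ x in Icc b a, ψ x := by
    have hsq : ConvexOn ℝ (univ : Set ℝ) (fun x : ℝ => x ^ 2) :=
      (Even.convexOn_pow (by norm_num))
    have h := hsq.map_set_average_le (t := Icc b a) (f := deriv φ)
      (continuous_pow 2).continuousOn isClosed_univ
      (by simp [Real.volume_Icc, hba.le]; linarith)
      (by simp [Real.volume_Icc]) (Filter.Eventually.of_forall fun _ => mem_univ _)
      hφ'int (by simpa [hψ, Function.comp_def] using hψint)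
    simp only [average_eq, measureReal_restrict_apply_univ, measureReal_def, Measure.restrict_apply_univ, hvol, smul_eq_mul, hftc] at h
    simpa only [hψ] using h
  -- bound on ∫ ψ by convexity
  set c : ℝ := (ψ a - ψ b) / (a - b) with hc
  have hconvbound : ∫ x in Icc b a, ψ x ≤ (a - b) * (ψ a + ψ b) / 2 := by
    have hpt : ∀ x ∈ Icc b a, ψ x ≤ (ψ b - c * b) + c * x := by
      intro x hx
      have hx1 := hx.1; have hx2 := hx.2
      have h := hconv.2 (mem_univ b) (mem_univ a)
        (div_nonneg (by linarith : (0:ℝ) ≤ a - x) hab.le)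
        (div_nonneg (by linarith : (0:ℝ) ≤ x - b) hab.le)
        (by field_simp; ring)
      have hxeq : ((a - x) / (a - b)) • b + ((x - b) / (a - b)) • a = x := by
        rw [smul_eq_mul, smul_eq_mul]; field_simp; ring
      rw [hxeq] at h
      calc ψ x ≤ ((a - x) / (a - b)) * ψ b + ((x - b) / (a - b)) * ψ a := h
        _ = (ψ b - c * b) + c * x := by rw [hc]; field_simp; ring
    have hmono : ∫ x in Icc b a, ψ x
        ≤ ∫ x in Icc b a, ((ψ b - c * b) + c * x) := by
      refine setIntegral_mono_on hψint ?_ measurableSet_Icc hpt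
      exact ((continuous_const.add (continuous_const.mul continuous_id)).continuousOn.integrableOn_Icc)
    have hcalc : ∫ x in Icc b a, ((ψ b - c * b) + c * x)
        = (a - b) * (ψ a + ψ b) / 2 := by
      rw [MeasureTheory.integral_Icc_eq_integral_Ioc,
        ← intervalIntegral.integral_of_le hba.le,
        integral_add intervalIntegrable_const ((intervalIntegrable_id).const_mul _),
        intervalIntegral.integral_const, intervalIntegral.integral_const_mul, integral_id]
      simp only [smul_eq_mul, hc]
      field_simp
      ring
    linarith [hmono.trans_eq hcalc]
  have h2 : (φ a - φ b) ^ 2 ≤ (a - b) * ∫ x in Icc b a, ψ x := by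
    have h3 := mul_le_mul_of_nonneg_left hjensen (sq_nonneg (a - b))
    calc (φ a - φ b) ^ 2 = (a - b) ^ 2 * ((a - b)⁻¹ * (φ a - φ b)) ^ 2 := by
          field_simp
      _ ≤ (a - b) ^ 2 * ((a - b)⁻¹ * ∫ x in Icc b a, ψ x) := h3
      _ = (a - b) * ∫ x in Icc b a, ψ x := by
          field_simp [hab.ne']
  calc (φ a - φ b) ^ 2 ≤ (a - b) * ∫ x in Icc b a, ψ x := h2
    _ ≤ (a - b) * ((a - b) * (ψ a + ψ b) / 2) :=
        mul_le_mul_of_nonneg_left hconvbound hab.le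
    _ = (1 / 2) * (a - b) ^ 2 * (ψ a + ψ b) := by ring

/-- Scalar mean-value inequality: if `ψ = (φ')²` is convex, then
`(φ a - φ b)² ≤ (1/2) (a-b)² (ψ a + ψ b)`. -/
theorem scalar_mean_value_inequality (φ ψ : ℝ → ℝ) (hφ : Differentiable ℝ φ)
    (hψ : ψ = fun s => (deriv φ s) ^ 2) (hconv : ConvexOn ℝ Set.univ ψ) (a b : ℝ) :
    (φ a - φ b) ^ 2 ≤ (1 / 2) * (a - b) ^ 2 * (ψ a + ψ b) := by
  rcases lt_trichotomy b a with h | h | h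
  · exact smvi_aux φ ψ hφ hψ hconv h
  · subst h; simp
  · have := smvi_aux φ ψ hφ hψ hconv h
    nlinarith [this]
end

section
/- Let A and B be d × d Hermitian complex matrices, and let φ : ℝ → ℝ be a differentiable function whose squared derivative ψ = (φ')² is convex. Then tr[(φ(A) - φ(B))²] ≤ (1/2) · tr[(A - B)² · (ψ(A) + ψ(B))], where φ and ψ are applied as spectral (matrix) functions. -/
set_option maxHeartbeats 800000

open intervalIntegral MeasureTheory

lemma scalar_mvti (φ ψ : ℝ → ℝ) (hφ : Differentiable ℝ φ)
    (hψ : ψ = fun s => (deriv φ s) ^ 2) (hconv : ConvexOn ℝ Set.univ ψ)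
    (x y : ℝ) : (φ x - φ y) ^ 2 ≤ (1 / 2) * ((x - y) ^ 2 * (ψ x + ψ y)) := by
  -- ψ is continuous
  have hψc : Continuous ψ := by
    rw [← continuousOn_univ]
    simpa using hconv.continuousOn isOpen_univ
  have hψnn : ∀ s, 0 ≤ ψ s := by intro s; rw [hψ]; positivity
  -- parametrize
  set g : ℝ → ℝ := fun t => deriv φ (y + t * (x - y)) with hg
  have hgsq : ∀ t, g t ^ 2 = ψ (y + t * (x - y)) := by intro t; rw [hψ]
  have hgsqc : Continuous (fun t => g t ^ 2) := by
    simp only [hgsq]; exact hψc.comp (by continuity)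
  -- g is measurable
  have hgm : Measurable g :=
    (measurable_deriv φ).comp ((measurable_id.mul_const (x - y)).const_add y)
  -- g is bounded on [0,1]
  obtain ⟨M, hM⟩ : ∃ M, ∀ t ∈ Set.uIcc (0:ℝ) 1, |g t| ≤ M := by
    obtain ⟨M, hM⟩ := (isCompact_uIcc (a := (0:ℝ)) (b := 1)).exists_bound_of_continuousOn
      (hgsqc.continuousOn)
    refine ⟨Real.sqrt M, fun t ht => ?_⟩
    have := hM t ht
    rw [Real.norm_eq_abs] at this
    have h1 : g t ^ 2 ≤ M := le_trans (le_abs_self _) this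
    calc |g t| = Real.sqrt (g t ^ 2) := by rw [Real.sqrt_sq_eq_abs]
    _ ≤ Real.sqrt M := Real.sqrt_le_sqrt h1
  have hgint : IntervalIntegrable g volume 0 1 := by
    refine (intervalIntegrable_const (c := M)).mono_fun
      hgm.aestronglyMeasurable.restrict ?_
    have hsub : Set.uIoc (0:ℝ) 1 ⊆ Set.uIcc (0:ℝ) 1 := Set.Ioc_subset_Icc_self
    filter_upwards [MeasureTheory.ae_restrict_mem measurableSet_uIoc] with t ht
    have := hM t (hsub ht)
    rw [Real.norm_eq_abs, Real.norm_eq_abs]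
    exact this.trans (le_abs_self M)
  have hgsqint : IntervalIntegrable (fun t => g t ^ 2) volume 0 1 :=
    hgsqc.intervalIntegrable _ _
  -- FTC
  have hftc : ∫ t in (0:ℝ)..1, (x - y) * g t = φ x - φ y := by
    have : ∀ t ∈ Set.uIcc (0:ℝ) 1, HasDerivAt (fun t => φ (y + t * (x - y))) ((x - y) * g t) t := by
      intro t _
      have h1 : HasDerivAt (fun t : ℝ => y + t * (x - y)) (x - y) t := by
        simpa using ((hasDerivAt_id t).mul_const (x - y)).const_add y
      simpa [mul_comm, hg, Function.comp_def] using ((hφ _).hasDerivAt.comp t h1)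
    rw [intervalIntegral.integral_eq_sub_of_hasDerivAt this (hgint.const_mul _)]
    simp
  set I : ℝ := ∫ t in (0:ℝ)..1, g t with hI
  have hphi : φ x - φ y = (x - y) * I := by
    rw [← hftc, intervalIntegral.integral_const_mul]
  -- Jensen: I^2 ≤ ∫ g^2
  have hJ : I ^ 2 ≤ ∫ t in (0:ℝ)..1, g t ^ 2 := by
    have h0 : (0:ℝ) ≤ ∫ t in (0:ℝ)..1, (g t - I) ^ 2 :=
      intervalIntegral.integral_nonneg (by norm_num) (fun t _ => sq_nonneg _)
    have hexp : ∫ t in (0:ℝ)..1, (g t - I) ^ 2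
        = (∫ t in (0:ℝ)..1, g t ^ 2) - I ^ 2 := by
      have : ∀ t, (g t - I) ^ 2 = g t ^ 2 - (2 * I) * g t + I ^ 2 := by intro t; ring
      simp only [this]
      rw [intervalIntegral.integral_add (hgsqint.sub (hgint.const_mul _)) intervalIntegrable_const,
        intervalIntegral.integral_sub hgsqint (hgint.const_mul _),
        intervalIntegral.integral_const_mul]
      simp [← hI]
      ring
    linarith
  -- convexity: ∫ g^2 ≤ (ψ x + ψ y)/2
  have hC : (∫ t in (0:ℝ)..1, g t ^ 2) ≤ (ψ x + ψ y) / 2 := by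
    have hmono : ∀ t ∈ Set.uIcc (0:ℝ) 1, g t ^ 2 ≤ (1 - t) * ψ y + t * ψ x := by
      intro t ht
      rw [Set.uIcc_of_le (by norm_num)] at ht
      have := hconv.2 (Set.mem_univ y) (Set.mem_univ x) (by linarith [ht.2] : (0:ℝ) ≤ 1 - t)
        ht.1 (by ring)
      rw [hgsq t]
      have heq : y + t * (x - y) = (1 - t) • y + t • x := by simp [smul_eq_mul]; ring
      rw [heq]
      simpa [smul_eq_mul] using this
    have hint2 : IntervalIntegrable (fun t => (1 - t) * ψ y + t * ψ x) volume 0 1 :=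
      (Continuous.intervalIntegrable (by fun_prop)) _ _
    have := intervalIntegral.integral_mono_on (by norm_num) hgsqint hint2
      (fun t ht => hmono t (by rwa [Set.uIcc_of_le (by norm_num)]))
    have hval : (∫ t in (0:ℝ)..1, ((1 - t) * ψ y + t * ψ x)) = (ψ x + ψ y) / 2 := by
      rw [intervalIntegral.integral_add ((Continuous.intervalIntegrable (by fun_prop)) _ _)
        ((Continuous.intervalIntegrable (by fun_prop)) _ _)]
      simp only [sub_mul, one_mul]
      rw [intervalIntegral.integral_sub intervalIntegrable_const
        ((Continuous.intervalIntegrable (by fun_prop)) _ _),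
        intervalIntegral.integral_mul_const, intervalIntegral.integral_mul_const, integral_id]
      simp; ring
    linarith
  calc (φ x - φ y) ^ 2 = (x - y) ^ 2 * I ^ 2 := by rw [hphi]; ring
  _ ≤ (x - y) ^ 2 * ((ψ x + ψ y) / 2) :=
      mul_le_mul_of_nonneg_left (le_trans hJ hC) (sq_nonneg _)
  _ = (1 / 2) * ((x - y) ^ 2 * (ψ x + ψ y)) := by ring
set_option maxHeartbeats 1000000

open Matrix

variable {d : ℕ} {A B : Matrix (Fin d) (Fin d) ℂ}

/-- overlap matrix -/
noncomputable def ovl (hA : A.IsHermitian) (hB : B.IsHermitian) :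
    Matrix (Fin d) (Fin d) ℂ :=
  star (hA.eigenvectorUnitary : Matrix (Fin d) (Fin d) ℂ) *
    (hB.eigenvectorUnitary : Matrix (Fin d) (Fin d) ℂ)

lemma ovl_mul_star (hA : A.IsHermitian) (hB : B.IsHermitian) :
    ovl hA hB * star (ovl hA hB) = 1 := by
  simp only [ovl, StarMul.star_mul, star_star, mul_assoc]
  rw [← mul_assoc (hB.eigenvectorUnitary : Matrix (Fin d) (Fin d) ℂ),
    Unitary.mul_star_self_of_mem (SetLike.coe_mem _), one_mul,
    Unitary.star_mul_self_of_mem (SetLike.coe_mem _)]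

lemma star_mul_ovl (hA : A.IsHermitian) (hB : B.IsHermitian) :
    star (ovl hA hB) * ovl hA hB = 1 := by
  simp only [ovl, StarMul.star_mul, star_star, mul_assoc]
  rw [← mul_assoc (hA.eigenvectorUnitary : Matrix (Fin d) (Fin d) ℂ),
    Unitary.mul_star_self_of_mem (SetLike.coe_mem _), one_mul,
    Unitary.star_mul_self_of_mem (SetLike.coe_mem _)]

lemma ovl_row_sum (hA : A.IsHermitian) (hB : B.IsHermitian) (k : Fin d) :
    ∑ l, Complex.normSq (ovl hA hB k l) = 1 := by
  have h := congrFun (congrFun (ovl_mul_star hA hB) k) k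
  rw [Matrix.mul_apply] at h
  simp only [Matrix.one_apply_eq] at h
  have : ∀ l, ovl hA hB k l * (star (ovl hA hB)) l k
      = (Complex.normSq (ovl hA hB k l) : ℂ) := by
    intro l
    rw [Matrix.star_apply, ← Complex.mul_conj]
    rfl
  rw [Finset.sum_congr rfl (fun l _ => this l)] at h
  exact_mod_cast h

lemma ovl_col_sum (hA : A.IsHermitian) (hB : B.IsHermitian) (l : Fin d) :
    ∑ k, Complex.normSq (ovl hA hB k l) = 1 := by
  have h := congrFun (congrFun (star_mul_ovl hA hB) l) l
  rw [Matrix.mul_apply] at h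
  simp only [Matrix.one_apply_eq] at h
  have : ∀ k, (star (ovl hA hB)) l k * ovl hA hB k l
      = (Complex.normSq (ovl hA hB k l) : ℂ) := by
    intro k
    rw [Matrix.star_apply, show star (ovl hA hB k l) = (starRingEnd ℂ) (ovl hA hB k l) from rfl,
      ← Complex.normSq_eq_conj_mul_self]
  rw [Finset.sum_congr rfl (fun k _ => this k)] at h
  exact_mod_cast h

/-- trace of a product of two spectral functions -/
lemma trace_cfc_mul_cfc (hA : A.IsHermitian) (hB : B.IsHermitian) (f g : ℝ → ℝ) :
    (hA.cfc f * hB.cfc g).trace =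
      ((∑ k, ∑ l, f (hA.eigenvalues k) * g (hB.eigenvalues l) *
        Complex.normSq (ovl hA hB k l) : ℝ) : ℂ) := by
  set U : Matrix (Fin d) (Fin d) ℂ := (hA.eigenvectorUnitary : Matrix (Fin d) (Fin d) ℂ) with hU
  set V : Matrix (Fin d) (Fin d) ℂ := (hB.eigenvectorUnitary : Matrix (Fin d) (Fin d) ℂ) with hV
  set Df : Matrix (Fin d) (Fin d) ℂ := diagonal (RCLike.ofReal ∘ f ∘ hA.eigenvalues) with hDf
  set Eg : Matrix (Fin d) (Fin d) ℂ := diagonal (RCLike.ofReal ∘ g ∘ hB.eigenvalues) with hEg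
  have h1 : hA.cfc f * hB.cfc g
      = U * (Df * (ovl hA hB * Eg * star (ovl hA hB))) * star U := by
    simp only [Matrix.IsHermitian.cfc, Unitary.conjStarAlgAut_apply, ovl, StarMul.star_mul, star_star, mul_assoc, ← hU, ← hV,
      ← hDf, ← hEg]
    rw [show U * star U = 1 from Unitary.mul_star_self_of_mem (SetLike.coe_mem _), mul_one]
  rw [h1, Matrix.trace_mul_cycle,
    show star U * U = 1 from Unitary.star_mul_self_of_mem (SetLike.coe_mem _), one_mul,
    Matrix.trace]
  push_cast
  refine Finset.sum_congr rfl fun k _ => ?_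
  show (Df * (ovl hA hB * Eg * star (ovl hA hB))) k k
      = ∑ l, (f (hA.eigenvalues k) : ℂ) * (g (hB.eigenvalues l) : ℂ) *
          (Complex.normSq (ovl hA hB k l) : ℂ)
  rw [hDf, Matrix.diagonal_mul, Matrix.mul_apply, Finset.mul_sum]
  refine Finset.sum_congr rfl fun l _ => ?_
  rw [Matrix.mul_diagonal, Matrix.star_apply]
  have hrearr : ovl hA hB k l * (RCLike.ofReal ∘ g ∘ hB.eigenvalues) l * star (ovl hA hB k l)
      = ((RCLike.ofReal ∘ g ∘ hB.eigenvalues) l) * (ovl hA hB k l * star (ovl hA hB k l)) := by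
    ring
  rw [hrearr, show star (ovl hA hB k l) = (starRingEnd ℂ) (ovl hA hB k l) from rfl,
    Complex.mul_conj]
  show (Complex.ofReal (f (hA.eigenvalues k)))
      * ((Complex.ofReal (g (hB.eigenvalues l))) * _) = _
  ring

lemma cfc_mul_cfc_same (hA : A.IsHermitian) (f g : ℝ → ℝ) :
    hA.cfc f * hA.cfc g = hA.cfc (fun s => f s * g s) := by
  simp only [Matrix.IsHermitian.cfc, Unitary.conjStarAlgAut_apply]
  have h {a b c e f : Matrix (Fin d) (Fin d) ℂ} :
      a * b * c * (a * e * f) = a * (b * (c * a) * e) * f := by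
    simp only [mul_assoc]
  rw [h, Unitary.star_mul_self_of_mem (SetLike.coe_mem _), mul_one, diagonal_mul_diagonal]
  have : (fun i => ((RCLike.ofReal ∘ f ∘ hA.eigenvalues) i : ℂ)
        * (RCLike.ofReal ∘ g ∘ hA.eigenvalues) i)
      = RCLike.ofReal ∘ (fun s => f s * g s) ∘ hA.eigenvalues := by
    funext i
    exact (RCLike.ofReal_mul _ _).symm
  rw [this]

lemma cfc_id_eq (hA : A.IsHermitian) : hA.cfc (fun s => s) = A := by
  rw [Matrix.IsHermitian.cfc]
  exact hA.spectral_theorem.symm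

lemma trace_cfc_single (hA : A.IsHermitian) (f : ℝ → ℝ) :
    (hA.cfc f).trace = ((∑ k, f (hA.eigenvalues k) : ℝ) : ℂ) := by
  rw [Matrix.IsHermitian.cfc, Unitary.conjStarAlgAut_apply, Matrix.trace_mul_cycle,
    show star (hA.eigenvectorUnitary : Matrix (Fin d) (Fin d) ℂ) *
      (hA.eigenvectorUnitary : Matrix (Fin d) (Fin d) ℂ) = 1
      from Unitary.star_mul_self_of_mem (SetLike.coe_mem _), one_mul, Matrix.trace_diagonal]
  push_cast
  exact Finset.sum_congr rfl fun i _ => rfl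

lemma cfc_one_eq (hA : A.IsHermitian) : hA.cfc (fun _ => 1) = 1 := by
  rw [Matrix.IsHermitian.cfc, Unitary.conjStarAlgAut_apply]
  have : RCLike.ofReal ∘ (fun _ : ℝ => (1:ℝ)) ∘ hA.eigenvalues = fun _ => (1:ℂ) := by
    funext i
    simp
  rw [this, Matrix.diagonal_one, mul_one]
  exact Unitary.mul_star_self_of_mem (SetLike.coe_mem _)


open Matrix

/-- Mean-value trace inequality (Lemma 3.1): for Hermitian `A`, `B` and `φ` with
convex squared derivative `ψ = (φ')²`,
`tr[(φ(A) - φ(B))²] ≤ (1/2) tr[(A - B)² (ψ(A) + ψ(B))]`,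
where `φ`, `ψ` act spectrally via `Matrix.IsHermitian.cfc`. -/
theorem mean_value_trace_inequality {d : ℕ} (A B : Matrix (Fin d) (Fin d) ℂ)
    (hA : A.IsHermitian) (hB : B.IsHermitian)
    (φ ψ : ℝ → ℝ) (hφ : Differentiable ℝ φ) (hψ : ψ = fun s => (deriv φ s) ^ 2)
    (hconv : ConvexOn ℝ Set.univ ψ) :
    (((hA.cfc φ - hB.cfc φ) ^ 2).trace).re ≤
      (1 / 2) * (((A - B) ^ 2 * (hA.cfc ψ + hB.cfc ψ)).trace).re := by
  have key : ∀ x y : ℝ, (φ x - φ y) ^ 2 ≤ (1 / 2) * ((x - y) ^ 2 * (ψ x + ψ y)) :=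
    scalar_mvti φ ψ hφ hψ hconv
  set lam := hA.eigenvalues with hlam
  set mu := hB.eigenvalues with hmu
  set P : Fin d → Fin d → ℝ := fun k l => Complex.normSq (ovl hA hB k l) with hP
  have hPnn : ∀ k l, 0 ≤ P k l := fun k l => Complex.normSq_nonneg _
  have expand_row : ∀ c : Fin d → ℝ, ∑ k, c k = ∑ k, ∑ l, c k * P k l := by
    intro c
    refine Finset.sum_congr rfl fun k _ => ?_
    rw [← Finset.mul_sum, hP]
    rw [ovl_row_sum hA hB k, mul_one]
  have expand_col : ∀ c : Fin d → ℝ, ∑ l, c l = ∑ k, ∑ l, c l * P k l := by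
    intro c
    rw [Finset.sum_comm]
    refine Finset.sum_congr rfl fun l _ => ?_
    rw [← Finset.mul_sum, hP]
    rw [ovl_col_sum hA hB l, mul_one]
  -- the eight traces for the RHS
  have h1 : (A * A * hA.cfc ψ).trace = ((∑ k, lam k * lam k * ψ (lam k) : ℝ) : ℂ) := by
    calc (A * A * hA.cfc ψ).trace
        = (hA.cfc (fun s => s) * hA.cfc (fun s => s) * hA.cfc ψ).trace := by
          rw [cfc_id_eq hA]
      _ = _ := by rw [cfc_mul_cfc_same hA, cfc_mul_cfc_same hA, trace_cfc_single]
  have h8 : (B * B * hB.cfc ψ).trace = ((∑ l, mu l * mu l * ψ (mu l) : ℝ) : ℂ) := by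
    calc (B * B * hB.cfc ψ).trace
        = (hB.cfc (fun s => s) * hB.cfc (fun s => s) * hB.cfc ψ).trace := by
          rw [cfc_id_eq hB]
      _ = _ := by rw [cfc_mul_cfc_same hB, cfc_mul_cfc_same hB, trace_cfc_single]
  have h2 : (A * A * hB.cfc ψ).trace
      = ((∑ k, ∑ l, lam k * lam k * ψ (mu l) * P k l : ℝ) : ℂ) := by
    calc (A * A * hB.cfc ψ).trace
        = (hA.cfc (fun s => s) * hA.cfc (fun s => s) * hB.cfc ψ).trace := by
          rw [cfc_id_eq hA]
      _ = _ := by rw [cfc_mul_cfc_same hA, trace_cfc_mul_cfc hA hB]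
  have h3 : (A * B * hA.cfc ψ).trace
      = ((∑ k, ∑ l, ψ (lam k) * lam k * mu l * P k l : ℝ) : ℂ) := by
    rw [Matrix.trace_mul_cycle]
    calc (hA.cfc ψ * A * B).trace
        = (hA.cfc ψ * hA.cfc (fun s => s) * hB.cfc (fun s => s)).trace := by
          rw [cfc_id_eq hA, cfc_id_eq hB]
      _ = _ := by rw [cfc_mul_cfc_same hA, trace_cfc_mul_cfc hA hB]
  have h4 : (B * A * hA.cfc ψ).trace
      = ((∑ k, ∑ l, lam k * ψ (lam k) * mu l * P k l : ℝ) : ℂ) := by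
    rw [mul_assoc, Matrix.trace_mul_comm]
    calc (A * hA.cfc ψ * B).trace
        = (hA.cfc (fun s => s) * hA.cfc ψ * hB.cfc (fun s => s)).trace := by
          rw [cfc_id_eq hA, cfc_id_eq hB]
      _ = _ := by rw [cfc_mul_cfc_same hA, trace_cfc_mul_cfc hA hB]
  have h5 : (A * B * hB.cfc ψ).trace
      = ((∑ k, ∑ l, lam k * (mu l * ψ (mu l)) * P k l : ℝ) : ℂ) := by
    rw [mul_assoc]
    calc (A * (B * hB.cfc ψ)).trace
        = (hA.cfc (fun s => s) * (hB.cfc (fun s => s) * hB.cfc ψ)).trace := by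
          rw [cfc_id_eq hA, cfc_id_eq hB]
      _ = _ := by rw [cfc_mul_cfc_same hB, trace_cfc_mul_cfc hA hB]
  have h6 : (B * A * hB.cfc ψ).trace
      = ((∑ k, ∑ l, lam k * (ψ (mu l) * mu l) * P k l : ℝ) : ℂ) := by
    rw [Matrix.trace_mul_cycle, Matrix.trace_mul_comm]
    calc (A * (hB.cfc ψ * B)).trace
        = (hA.cfc (fun s => s) * (hB.cfc ψ * hB.cfc (fun s => s))).trace := by
          rw [cfc_id_eq hA, cfc_id_eq hB]
      _ = _ := by rw [cfc_mul_cfc_same hB, trace_cfc_mul_cfc hA hB]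
  have h7 : (B * B * hA.cfc ψ).trace
      = ((∑ k, ∑ l, ψ (lam k) * (mu l * mu l) * P k l : ℝ) : ℂ) := by
    rw [Matrix.trace_mul_cycle, mul_assoc]
    calc (hA.cfc ψ * (B * B)).trace
        = (hA.cfc ψ * (hB.cfc (fun s => s) * hB.cfc (fun s => s))).trace := by
          rw [cfc_id_eq hB]
      _ = _ := by rw [cfc_mul_cfc_same hB, trace_cfc_mul_cfc hA hB]
  -- traces of products of φ-functions
  have tAA : (hA.cfc φ * hA.cfc φ).trace = ((∑ k, φ (lam k) * φ (lam k) : ℝ) : ℂ) := by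
    rw [cfc_mul_cfc_same hA, trace_cfc_single]
  have tBB : (hB.cfc φ * hB.cfc φ).trace = ((∑ l, φ (mu l) * φ (mu l) : ℝ) : ℂ) := by
    rw [cfc_mul_cfc_same hB, trace_cfc_single]
  have tAB : (hA.cfc φ * hB.cfc φ).trace
      = ((∑ k, ∑ l, φ (lam k) * φ (mu l) * P k l : ℝ) : ℂ) :=
    trace_cfc_mul_cfc hA hB φ φ
  -- LHS identity
  have hL : ((hA.cfc φ - hB.cfc φ) ^ 2).trace
      = ((∑ k, ∑ l, P k l * (φ (lam k) - φ (mu l)) ^ 2 : ℝ) : ℂ) := by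
    have e : (hA.cfc φ - hB.cfc φ) ^ 2
        = hA.cfc φ * hA.cfc φ - hA.cfc φ * hB.cfc φ - hB.cfc φ * hA.cfc φ
          + hB.cfc φ * hB.cfc φ := by
      noncomm_ring
    rw [e, Matrix.trace_add, Matrix.trace_sub, Matrix.trace_sub,
      Matrix.trace_mul_comm (hB.cfc φ) (hA.cfc φ), tAA, tBB, tAB]
    norm_cast
    rw [expand_row (fun k => φ (lam k) * φ (lam k)),
      expand_col (fun l => φ (mu l) * φ (mu l))]
    simp only [← Finset.sum_sub_distrib, ← Finset.sum_add_distrib]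
    refine Finset.sum_congr rfl fun k _ => Finset.sum_congr rfl fun l _ => ?_
    ring
  -- RHS identity
  have hR : ((A - B) ^ 2 * (hA.cfc ψ + hB.cfc ψ)).trace
      = ((∑ k, ∑ l, P k l * ((lam k - mu l) ^ 2 * (ψ (lam k) + ψ (mu l))) : ℝ) : ℂ) := by
    have e : (A - B) ^ 2 * (hA.cfc ψ + hB.cfc ψ)
        = A * A * hA.cfc ψ + A * A * hB.cfc ψ - A * B * hA.cfc ψ - A * B * hB.cfc ψ
          - B * A * hA.cfc ψ - B * A * hB.cfc ψ + B * B * hA.cfc ψ + B * B * hB.cfc ψ := by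
      noncomm_ring
    rw [e, Matrix.trace_add, Matrix.trace_add, Matrix.trace_sub, Matrix.trace_sub,
      Matrix.trace_sub, Matrix.trace_sub, Matrix.trace_add,
      h1, h2, h3, h4, h5, h6, h7, h8]
    norm_cast
    rw [expand_row (fun k => lam k * lam k * ψ (lam k)),
      expand_col (fun l => mu l * mu l * ψ (mu l))]
    simp only [← Finset.sum_sub_distrib, ← Finset.sum_add_distrib]
    refine Finset.sum_congr rfl fun k _ => Finset.sum_congr rfl fun l _ => ?_
    ring
  rw [hL, hR, Complex.ofReal_re, Complex.ofReal_re, Finset.mul_sum]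
  refine Finset.sum_le_sum fun k _ => ?_
  rw [Finset.mul_sum]
  refine Finset.sum_le_sum fun l _ => ?_
  calc P k l * (φ (lam k) - φ (mu l)) ^ 2
      ≤ P k l * ((1 / 2) * ((lam k - mu l) ^ 2 * (ψ (lam k) + ψ (mu l)))) :=
        mul_le_mul_of_nonneg_left (key _ _) (hPnn k l)
    _ = 1 / 2 * (P k l * ((lam k - mu l) ^ 2 * (ψ (lam k) + ψ (mu l)))) := by ring
end

section
/- Let f be a random d × d Hermitian matrix. For any λ > 0 and θ > 0, P{‖f‖ ≥ λ} ≤ 2 e^{-θλ} · E tr cosh(θ f), where ‖·‖ is the ℓ₂ operator norm. -/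
open MeasureTheory Matrix
open scoped Matrix.Norms.L2Operator

/-- Real trace of the spectral function `φ(A)` of a Hermitian matrix. -/
noncomputable def trFn {d : ℕ} (φ : ℝ → ℝ) {A : Matrix (Fin d) (Fin d) ℂ}
    (hA : A.IsHermitian) : ℝ :=
  ((hA.cfc φ).trace).re

noncomputable def matCStar (d : ℕ) : CStarAlgebra (Matrix (Fin d) (Fin d) ℂ) :=
  { Matrix.instL2OpNormedRing, Matrix.instL2OpNormedAlgebra, Matrix.instCStarRing,
    (inferInstance : StarRing (Matrix (Fin d) (Fin d) ℂ)),
    (inferInstance : CompleteSpace (Matrix (Fin d) (Fin d) ℂ)),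
    (inferInstance : StarModule ℂ (Matrix (Fin d) (Fin d) ℂ)) with }

lemma exists_eigen_ge {d : ℕ} {A : Matrix (Fin d) (Fin d) ℂ} (hA : A.IsHermitian)
    {lam : ℝ} (hlam : 0 < lam) (h : lam ≤ ‖A‖) : ∃ i, lam ≤ |hA.eigenvalues i| := by
  letI : CStarAlgebra (Matrix (Fin d) (Fin d) ℂ) := Matrix.instCStarAlgebra
  have hsa : IsSelfAdjoint A := hA
  have h1 : spectralRadius ℝ A = ‖A‖₊ := by
    rw [hsa.spectrumRestricts.spectralRadius_eq, hsa.spectralRadius_eq_nnnorm]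
  have h2 : spectralRadius ℝ A ≤
      (Finset.univ.sup (fun i => ‖hA.eigenvalues i‖₊) : NNReal) := by
    rw [spectralRadius]
    refine iSup₂_le fun k hk => ?_
    rw [hA.spectrum_real_eq_range_eigenvalues] at hk
    obtain ⟨i, rfl⟩ := hk
    exact ENNReal.coe_le_coe.mpr
      (Finset.le_sup (f := fun i => ‖hA.eigenvalues i‖₊) (Finset.mem_univ i))
  have h3 : ‖A‖₊ ≤ Finset.univ.sup (fun i => ‖hA.eigenvalues i‖₊) := by
    rw [← ENNReal.coe_le_coe, ← h1]; exact h2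
  have hne : (Finset.univ : Finset (Fin d)).Nonempty := by
    by_contra hc
    rw [Finset.not_nonempty_iff_eq_empty] at hc
    rw [hc] at h3
    simp only [Finset.sup_empty] at h3
    have : ‖A‖ ≤ 0 := by exact_mod_cast h3
    linarith
  obtain ⟨i, -, hi⟩ := Finset.exists_mem_eq_sup _ hne (fun i => ‖hA.eigenvalues i‖₊)
  refine ⟨i, ?_⟩
  have : ‖A‖₊ ≤ ‖hA.eigenvalues i‖₊ := hi ▸ h3
  calc lam ≤ ‖A‖ := h
    _ ≤ ‖hA.eigenvalues i‖ := by exact_mod_cast this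
    _ = |hA.eigenvalues i| := Real.norm_eq_abs _

lemma trFn_eq_sum {d : ℕ} (φ : ℝ → ℝ) {A : Matrix (Fin d) (Fin d) ℂ}
    (hA : A.IsHermitian) : trFn φ hA = ∑ i, φ (hA.eigenvalues i) := by
  have hU : (star (hA.eigenvectorUnitary : Matrix (Fin d) (Fin d) ℂ)) *
      (hA.eigenvectorUnitary : Matrix (Fin d) (Fin d) ℂ) = 1 :=
    hA.eigenvectorUnitary.2.1
  rw [trFn, Matrix.IsHermitian.cfc, Unitary.conjStarAlgAut_apply, Matrix.trace_mul_cycle, hU, one_mul,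
    Matrix.trace_diagonal]
  simp [Complex.ofReal_re]

/-- Matrix moment method: `P{‖f‖ ≥ λ} ≤ 2 e^{-θλ} E tr cosh(θ f)`, where `‖·‖` is
the ℓ₂ operator norm. -/
theorem matrix_moment_method {Ω : Type*} [MeasurableSpace Ω] (μ : Measure Ω)
    [IsProbabilityMeasure μ] {d : ℕ}
    (f : Ω → Matrix (Fin d) (Fin d) ℂ) (hf : ∀ ω, (f ω).IsHermitian)
    (lam θ : ℝ) (hlam : 0 < lam) (hθ : 0 < θ)
    (hint : Integrable (fun ω => trFn (fun s => Real.cosh (θ * s)) (hf ω)) μ) :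
    (μ {ω | lam ≤ ‖f ω‖}).toReal ≤
      2 * Real.exp (-θ * lam) * ∫ ω, trFn (fun s => Real.cosh (θ * s)) (hf ω) ∂μ := by
  set g : Ω → ℝ := fun ω => trFn (fun s => Real.cosh (θ * s)) (hf ω) with hg
  have hgsum : ∀ ω, g ω = ∑ i, Real.cosh (θ * (hf ω).eigenvalues i) := fun ω =>
    trFn_eq_sum _ (hf ω)
  have hgnn : ∀ ω, 0 ≤ g ω := by
    intro ω
    rw [hgsum]
    exact Finset.sum_nonneg fun i _ => (Real.cosh_pos _).le
  set ε : ℝ := Real.exp (θ * lam) / 2 with hε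
  have hεpos : 0 < ε := by positivity
  have hsub : {ω | lam ≤ ‖f ω‖} ⊆ {ω | ε ≤ g ω} := by
    intro ω hω
    obtain ⟨i, hi⟩ := exists_eigen_ge (hf ω) hlam hω
    have h1 : Real.cosh (θ * lam) ≤ Real.cosh (θ * (hf ω).eigenvalues i) := by
      rw [Real.cosh_le_cosh, abs_mul, abs_mul, abs_of_pos hθ, abs_of_pos hlam]
      exact mul_le_mul_of_nonneg_left hi hθ.le
    have h2 : ε ≤ Real.cosh (θ * lam) := by
      rw [hε, Real.cosh_eq, div_le_div_iff_of_pos_right two_pos]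
      have := (Real.exp_pos (-(θ * lam))).le
      linarith
    have h3 : Real.cosh (θ * (hf ω).eigenvalues i) ≤ g ω := by
      rw [hgsum]
      exact Finset.single_le_sum (f := fun j => Real.cosh (θ * (hf ω).eigenvalues j))
        (fun j _ => (Real.cosh_pos _).le) (Finset.mem_univ i)
    exact le_trans h2 (le_trans h1 h3)
  have hmono : (μ {ω | lam ≤ ‖f ω‖}).toReal ≤ (μ {ω | ε ≤ g ω}).toReal :=
    ENNReal.toReal_mono (measure_ne_top μ _) (measure_mono hsub)
  have hmarkov : ε * (μ {ω | ε ≤ g ω}).toReal ≤ ∫ ω, g ω ∂μ :=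
    mul_meas_ge_le_integral_of_nonneg (Filter.Eventually.of_forall hgnn) hint ε
  have key : (μ {ω | lam ≤ ‖f ω‖}).toReal ≤ (∫ ω, g ω ∂μ) / ε := by
    rw [le_div_iff₀ hεpos]
    calc (μ {ω | lam ≤ ‖f ω‖}).toReal * ε = ε * (μ {ω | lam ≤ ‖f ω‖}).toReal := mul_comm _ _
      _ ≤ ε * (μ {ω | ε ≤ g ω}).toReal := by
          exact mul_le_mul_of_nonneg_left hmono hεpos.le
      _ ≤ ∫ ω, g ω ∂μ := hmarkov
  refine key.trans (le_of_eq ?_)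
  rw [hε, neg_mul, Real.exp_neg]
  have hexp := (Real.exp_pos (θ * lam)).ne'
  field_simp
end
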